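/- Let g be a dimension function and ψ : ℕ → ℝ⁺. If the sequence q ↦ q^{n+m−1} g(ψ(q)/q) is non-increasing and ψ(q)/q does not tend to 0 as q → ∞, then there is ε > 0 with g(r) = 0 for all r ≤ ε; consequently, for any dimension function f with f(r) = r^{m(n−1)} g(r), H^f(X) = 0 for every X ⊆ [0,1]^{nm}. -/

import Mathlib

open Set Metric MeasureTheory Filter

/-- A dimension function: nonnegative, non-decreasing, left continuous on positives,
tending to `0` at `0`. -/
def IsDimensionFunction (f : ℝ → ℝ) : Prop :=
  (∀ r, 0 < r → 0 ≤ f r) ∧ MonotoneOn f (Set.Ioi 0) ∧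
  (∀ r, 0 < r → ContinuousWithinAt f (Set.Iio r) r) ∧
  Filter.Tendsto f (nhdsWithin 0 (Set.Ioi 0)) (nhds 0)

/-- Hausdorff measure with respect to a dimension function `f`. -/
noncomputable def hausdorffF {X : Type*} [PseudoMetricSpace X] (f : ℝ → ℝ) (F : Set X) :
    ENNReal :=
  ⨆ (ρ : ℝ) (_ : 0 < ρ),
    ⨅ (c : ℕ → X) (r : ℕ → ℝ) (_ : ∀ i, 0 < r i ∧ r i ≤ ρ)
      (_ : F ⊆ ⋃ i, Metric.ball (c i) (r i)),
      ∑' i, ENNReal.ofReal (f (r i))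

/-- The unit cube `[0,1]^{nm}`, viewed as `n × m` matrices. -/
def unitCube (n m : ℕ) : Set (Fin n → Fin m → ℝ) :=
  {x | ∀ i ℓ, x i ℓ ∈ Set.Icc (0 : ℝ) 1}

/-- The supremum norm `|q|` of an integer vector, as a natural number. -/
def qnorm {n : ℕ} (q : Fin n → ℤ) : ℕ :=
  Finset.univ.sup fun i => (q i).natAbs

/-- The inhomogeneous set `A^y_{n,m}(Ψ)` for a multivariable approximating function
`Ψ : ℤ^n ∖ {0} → ℝ⁺`: points `x ∈ [0,1]^{nm}` with `|qx + p − y| < Ψ(q)` for infinitely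
many `(p,q) ∈ ℤ^m × ℤ^n ∖ {0}`. -/
def approxSetInhomQ (n m : ℕ) (Ψ : (Fin n → ℤ) → ℝ) (y : Fin m → ℝ) :
    Set (Fin n → Fin m → ℝ) :=
  {x | x ∈ unitCube n m ∧
    {pq : (Fin m → ℤ) × (Fin n → ℤ) | pq ≠ 0 ∧
      ∀ ℓ, |∑ i, (pq.2 i : ℝ) * x i ℓ + (pq.1 ℓ : ℝ) - y ℓ| < Ψ pq.2}.Infinite}

/-- If `q ↦ q^{n+m−1} g(ψ(q)/q)` is non-increasing and `ψ(q)/q ↛ 0`, then `g` vanishes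
on an interval `(0, ε]`; consequently `H^f(X) = 0` for every `X ⊆ [0,1]^{nm}` whenever
`f(r) = r^{m(n−1)} g(r)`. -/
theorem stmt19 (n m : ℕ) (hn : 1 ≤ n) (hm : 1 ≤ m)
    (g : ℝ → ℝ) (hg : IsDimensionFunction g)
    (ψ : ℕ → ℝ) (hψ : ∀ r, 0 ≤ ψ r)
    (hmono : ∀ a b : ℕ, 1 ≤ a → a ≤ b →
      (b : ℝ) ^ (n + m - 1) * g (ψ b / b) ≤ (a : ℝ) ^ (n + m - 1) * g (ψ a / a))
    (hnot : ¬ Tendsto (fun q : ℕ => ψ q / (q : ℝ)) atTop (nhds 0)) :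
    ∃ ε : ℝ, 0 < ε ∧ (∀ r : ℝ, 0 < r → r ≤ ε → g r = 0) ∧
      ∀ f : ℝ → ℝ, (∀ r : ℝ, 0 < r → f r = r ^ (m * (n - 1)) * g r) →
        IsDimensionFunction f →
        ∀ X : Set (Fin n → Fin m → ℝ), X ⊆ unitCube n m → hausdorffF f X = 0 := by
  obtain ⟨hg0, hgmono, _, _⟩ := hg
  -- get ε with ψ q / q ≥ ε frequently
  rw [Metric.tendsto_atTop] at hnot
  push_neg at hnot
  obtain ⟨ε, hε, hfreq⟩ := hnot
  have hgz : ∀ r : ℝ, 0 < r → r ≤ ε → g r = 0 := by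
    intro r hr hrε
    by_contra hne
    have hgr : 0 < g r := lt_of_le_of_ne (hg0 r hr) (Ne.symm hne)
    set C := (1 : ℝ) ^ (n + m - 1) * g (ψ 1 / 1) with hC
    obtain ⟨N, hN⟩ := Archimedean.arch C hgr
    obtain ⟨q, hqN, hq⟩ := hfreq (max (N + 1) 1)
    have hq1 : 1 ≤ q := le_trans (le_max_right _ 1) hqN
    have hqNle : (N : ℝ) + 1 ≤ q := by exact_mod_cast le_trans (le_max_left (N+1) 1) hqN
    rw [Real.dist_eq, sub_zero] at hq
    have hψq : ε ≤ ψ q / q := by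
      rcases abs_cases (ψ q / (q : ℝ)) with ⟨h1, _⟩ | ⟨_, h2⟩
      · linarith
      · have : (0:ℝ) ≤ ψ q / q := div_nonneg (hψ q) (Nat.cast_nonneg q)
        linarith [abs_nonneg (ψ q / (q : ℝ))]
    have hglb : g r ≤ g (ψ q / q) := hgmono hr (lt_of_lt_of_le hε hψq) (le_trans hrε hψq)
    have hqr : (1:ℝ) ≤ (q:ℝ) := by exact_mod_cast hq1
    have hnm : n + m - 1 ≠ 0 := by omega
    have hpow : (q : ℝ) ≤ (q : ℝ) ^ (n + m - 1) := le_self_pow₀ hqr hnm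
    have key : (q : ℝ) ^ (n + m - 1) * g r ≤ C := by
      calc (q : ℝ) ^ (n + m - 1) * g r ≤ (q : ℝ) ^ (n + m - 1) * g (ψ q / q) := by
            exact mul_le_mul_of_nonneg_left hglb (by positivity)
        _ ≤ C := by simpa [hC] using hmono 1 q le_rfl hq1
    have hNC : C < (q : ℝ) ^ (n + m - 1) * g r := by
      have h1 : C ≤ (N : ℝ) * g r := by
        have := hN
        simpa [nsmul_eq_mul] using this
      have h2 : (N : ℝ) * g r < ((N : ℝ) + 1) * g r := by nlinarith
      have h3 : ((N : ℝ) + 1) ≤ (q : ℝ) ^ (n + m - 1) := le_trans hqNle hpow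
      nlinarith [hg0 r hr]
    linarith
  refine ⟨ε, hε, hgz, ?_⟩
  intro f hf hfdim X hX
  refine le_antisymm ?_ zero_le
  rw [hausdorffF]
  apply iSup_le; intro ρ; apply iSup_le; intro hρ
  set δ := min ρ ε with hδdef
  have hδ : 0 < δ := lt_min hρ hε
  have hfδ : f δ = 0 := by
    rw [hf δ hδ, hgz δ hδ (min_le_right ρ ε), mul_zero]
  refine le_trans (iInf_le_of_le (TopologicalSpace.denseSeq _) ?_) le_rfl
  refine iInf_le_of_le (fun _ => δ) ?_
  refine iInf_le_of_le (fun i => ⟨hδ, min_le_left ρ ε⟩) ?_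
  refine iInf_le_of_le ?_ ?_
  · intro x _
    obtain ⟨i, hi⟩ := (Metric.denseRange_iff.mp
      (TopologicalSpace.denseRange_denseSeq (Fin n → Fin m → ℝ))) x δ hδ
    exact Set.mem_iUnion.mpr ⟨i, Metric.mem_ball.mpr (by rwa [dist_comm] at hi ⊢)⟩
  · simp [hfδ]
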